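/- The monad associativity law holds for the powerdomain bind: for all X : Set (Option S), f : S → Set (Option T), and g : T → Set (Option U), lift g (lift f X) = lift (fun a => lift g (f a)) X. -/

import Mathlib

open Classical in
/-- Monadic bind on the powerdomain: `∅` if some value in `X` is mapped to the error
value `∅`; otherwise the union of the results, keeping `none` if `none ∈ X`. -/
noncomputable def lift {S T : Type*} (f : S → Set (Option T)) (X : Set (Option S)) :
    Set (Option T) :=
  if ∃ a : S, some a ∈ X ∧ f a = ∅ then ∅
  else {x | x = none ∧ none ∈ X} ∪ ⋃ (a : S) (_ : some a ∈ X), f a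

lemma lift_empty {S T : Type*} (f : S → Set (Option T)) : lift f (∅ : Set (Option S)) = ∅ := by
  simp [lift]

lemma lift_eq_empty_iff {S T : Type*} (f : S → Set (Option T)) (X : Set (Option S)) :
    lift f X = ∅ ↔ (∃ a : S, some a ∈ X ∧ f a = ∅) ∨ X = ∅ := by
  unfold lift
  split_ifs with h
  · simp [h]
  · simp only [h, false_or]
    constructor
    · intro he
      ext x
      simp only [Set.mem_empty_iff_false, iff_false]
      intro hx
      match x with
      | none =>
        have : (none : Option T) ∈ ({x | x = none ∧ none ∈ X} ∪
            ⋃ (a : S) (_ : some a ∈ X), f a) := Or.inl ⟨rfl, hx⟩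
        rw [he] at this; exact this
      | some a =>
        have hfa : f a = ∅ := by
          ext y
          simp only [Set.mem_empty_iff_false, iff_false]
          intro hy
          have : y ∈ ({x | x = none ∧ none ∈ X} ∪
              ⋃ (a : S) (_ : some a ∈ X), f a) := Or.inr (by
            simp only [Set.mem_iUnion]; exact ⟨a, hx, hy⟩)
          rw [he] at this; exact this
        exact h ⟨a, hx, hfa⟩
    · intro hX; simp [hX]

theorem lift_assoc {S T U : Type*} (X : Set (Option S)) (f : S → Set (Option T))
    (g : T → Set (Option U)) :
    lift g (lift f X) = lift (fun a => lift g (f a)) X := by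
  by_cases h1 : ∃ a : S, some a ∈ X ∧ f a = ∅
  · obtain ⟨a, ha, hfa⟩ := h1
    have hL : lift f X = ∅ := by rw [lift, if_pos ⟨a, ha, hfa⟩]
    rw [hL, lift_empty]
    rw [lift, if_pos ⟨a, ha, by rw [hfa]; exact lift_empty g⟩]
  · have hLX : lift f X = {x | x = none ∧ none ∈ X} ∪ ⋃ (a : S) (_ : some a ∈ X), f a := by
      rw [lift, if_neg h1]
    by_cases h2 : ∃ a : S, ∃ b : T, some a ∈ X ∧ some b ∈ f a ∧ g b = ∅
    · obtain ⟨a, b, ha, hb, hgb⟩ := h2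
      have hbm : some b ∈ lift f X := by
        rw [hLX]; exact Or.inr (by simp only [Set.mem_iUnion]; exact ⟨a, ha, hb⟩)
      rw [show lift g (lift f X) = ∅ from by rw [lift, if_pos ⟨b, hbm, hgb⟩]]
      have hga : lift g (f a) = ∅ := by rw [lift, if_pos ⟨b, hb, hgb⟩]
      rw [lift, if_pos ⟨a, ha, hga⟩]
    · -- no errors anywhere
      push_neg at h2
      have hnoerrL : ¬∃ b : T, some b ∈ lift f X ∧ g b = ∅ := by
        rintro ⟨b, hb, hgb⟩
        rw [hLX] at hb
        rcases hb with ⟨h, _⟩ | hb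
        · exact absurd h (Option.some_ne_none b)
        · simp only [Set.mem_iUnion] at hb
          obtain ⟨a, ha, hba⟩ := hb
          exact (h2 a b ha hba).ne_empty hgb
      have hnoerrR : ¬∃ a : S, some a ∈ X ∧ lift g (f a) = ∅ := by
        rintro ⟨a, ha, hga⟩
        rcases (lift_eq_empty_iff g (f a)).mp hga with ⟨b, hb, hgb⟩ | hfa
        · exact (h2 a b ha hb).ne_empty hgb
        · exact h1 ⟨a, ha, hfa⟩
      have hga : ∀ a : S, some a ∈ X →
          lift g (f a) = {x | x = none ∧ none ∈ f a} ∪ ⋃ (b : T) (_ : some b ∈ f a), g b := by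
        intro a ha
        rw [lift, if_neg]
        rintro ⟨b, hb, hgb⟩
        exact (h2 a b ha hb).ne_empty hgb
      rw [show lift g (lift f X) = {x | x = none ∧ none ∈ lift f X} ∪
          ⋃ (b : T) (_ : some b ∈ lift f X), g b from by rw [lift, if_neg hnoerrL]]
      rw [show lift (fun a => lift g (f a)) X = {x | x = none ∧ none ∈ X} ∪
          ⋃ (a : S) (_ : some a ∈ X), lift g (f a) from by rw [lift, if_neg hnoerrR]]
      ext x
      simp only [Set.mem_union, Set.mem_setOf_eq, Set.mem_iUnion, hLX, hga]
      constructor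
      · rintro (⟨rfl, (⟨-, hn⟩ | ⟨a, ha, hna⟩)⟩ | ⟨b, hb, hx⟩)
        · exact Or.inl ⟨rfl, hn⟩
        · exact Or.inr ⟨a, ha, by rw [hga a ha]; exact Or.inl ⟨rfl, hna⟩⟩
        · rcases hb with ⟨h, -⟩ | ⟨a, ha, hba⟩
          · exact absurd h (Option.some_ne_none b)
          · refine Or.inr ⟨a, ha, ?_⟩
            rw [hga a ha]
            exact Or.inr (by simp only [Set.mem_iUnion]; exact ⟨b, hba, hx⟩)
      · rintro (⟨rfl, hn⟩ | ⟨a, ha, hx⟩)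
        · exact Or.inl ⟨rfl, Or.inl ⟨trivial, hn⟩⟩
        · rw [hga a ha] at hx
          rcases hx with ⟨rfl, hna⟩ | hx
          · exact Or.inl ⟨rfl, Or.inr ⟨a, ha, hna⟩⟩
          · simp only [Set.mem_iUnion] at hx
            obtain ⟨b, hb, hx⟩ := hx
            exact Or.inr ⟨b, Or.inr ⟨a, ha, hb⟩, hx⟩
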